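/- Let n = 2k be even, θ = 2π/(n+2), and for i ∈ [1:k] define ℓ_{2i} = ℓ_{2i−1} = 2sin(θ)sin(iθ)/(cos(iθ) − cos((i+1)θ)). Then ℓ₁ ≤ ℓ₂ ≤ … ≤ ℓ_n, i.e., the map i ↦ 2sin(θ)sin(iθ)/(cos(iθ) − cos((i+1)θ)) is nondecreasing in i on [1:k]. -/

import Mathlib

theorem left_links_monotone (k : ℕ) (hk : 1 ≤ k) :
    MonotoneOn
      (fun i : ℕ =>
        2 * Real.sin (2 * Real.pi / (2 * k + 2)) *
            Real.sin (i * (2 * Real.pi / (2 * k + 2))) /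
          (Real.cos (i * (2 * Real.pi / (2 * k + 2))) -
            Real.cos ((i + 1) * (2 * Real.pi / (2 * k + 2)))))
      (Set.Icc 1 k) := by
  set θ : ℝ := 2 * Real.pi / (2 * k + 2) with hθdef
  have hk1 : (0:ℝ) < 2 * (k:ℝ) + 2 := by positivity
  have hθpos : 0 < θ := by
    rw [hθdef]; positivity
  have hπ : ((k:ℝ) + 1) * θ = Real.pi := by
    rw [hθdef]; field_simp
  have hθle : θ ≤ Real.pi := by
    nlinarith [Nat.cast_nonneg (α := ℝ) k]
  -- denominator positivity
  have hD : ∀ i : ℕ, i ≤ k →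
      0 < Real.cos ((i:ℝ) * θ) - Real.cos (((i:ℝ) + 1) * θ) := by
    intro i hi
    have h1 : (0:ℝ) ≤ (i:ℝ) * θ := by positivity
    have h2 : ((i:ℝ) + 1) * θ ≤ Real.pi := by
      rw [← hπ]
      have : (i:ℝ) + 1 ≤ (k:ℝ) + 1 := by
        have := Nat.cast_le (α := ℝ).mpr hi; linarith
      nlinarith
    have h3 : (i:ℝ) * θ < ((i:ℝ) + 1) * θ := by nlinarith
    have := Real.cos_lt_cos_of_nonneg_of_le_pi h1 h2 h3
    linarith
  -- key identity
  have hid : ∀ x : ℝ,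
      Real.sin (x + θ) * (Real.cos x - Real.cos (x + θ)) -
        Real.sin x * (Real.cos (x + θ) - Real.cos (x + θ + θ)) =
      Real.sin θ * (1 - Real.cos θ) := by
    intro x
    rw [Real.sin_add, Real.cos_add, Real.cos_add (x + θ) θ, Real.sin_add, Real.cos_add]
    have hx := Real.sin_sq_add_cos_sq x
    have ht := Real.sin_sq_add_cos_sq θ
    linear_combination Real.sin θ * (1 - Real.cos θ) * hx
  have hsθ : 0 ≤ Real.sin θ := Real.sin_nonneg_of_nonneg_of_le_pi (le_of_lt hθpos) hθle
  have hcθ : Real.cos θ ≤ 1 := Real.cos_le_one θ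
  -- one-step inequality
  have step : ∀ i : ℕ, 1 ≤ i → i + 1 ≤ k →
      2 * Real.sin θ * Real.sin ((i:ℝ) * θ) /
          (Real.cos ((i:ℝ) * θ) - Real.cos (((i:ℝ) + 1) * θ)) ≤
        2 * Real.sin θ * Real.sin (((i:ℝ) + 1) * θ) /
          (Real.cos (((i:ℝ) + 1) * θ) - Real.cos (((i:ℝ) + 1 + 1) * θ)) := by
    intro i h1i hik
    have hDi := hD i (by omega)
    have hDi1 := hD (i + 1) hik
    push_cast at hDi1
    rw [div_le_div_iff₀ hDi hDi1]
    have hkey := hid ((i:ℝ) * θ)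
    have harr1 : (i:ℝ) * θ + θ = ((i:ℝ) + 1) * θ := by ring
    have harr2 : ((i:ℝ) + 1) * θ + θ = ((i:ℝ) + 1 + 1) * θ := by ring
    rw [harr1, harr2] at hkey
    nlinarith [mul_nonneg hsθ (mul_nonneg hsθ (sub_nonneg.mpr hcθ))]
  -- chain the steps
  intro a ha b hb hab
  simp only
  induction b, hab using Nat.le_induction with
  | base => exact le_refl _
  | succ n hn ih =>
    have hnk : n ≤ k := by
      have := hb.2; omega
    have h1n : 1 ≤ n := le_trans ha.1 hn
    have ihn := ih ⟨h1n, hnk⟩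
    refine le_trans ihn ?_
    have := step n h1n (by exact hb.2)
    push_cast
    push_cast at this
    convert this using 4 <;> push_cast <;> ring
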